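/- Let κ ∈ (0,1), λ = √(1−κ²), μ⁺ = √((1+κ)/2). Suppose P : U → ℂ is differentiable with (P')² = 4P³ − G₂P − G₃ where G₂ = 16(1+3λ²)/3, G₃ = 64(1−9λ²)/27, and P − (4/3 + 2κ) nonvanishing on U. Then y := μ⁺·(1 + 4κ/(P − (4/3 + 2κ))) satisfies (y')² = 8y⁴ − 8y² + 2λ². -/

import Mathlib

theorem stmt_18 (κ : ℝ) (hκ : κ ∈ Set.Ioo (0:ℝ) 1) (l : ℝ) (hl : l = Real.sqrt (1 - κ^2))
    (μp : ℝ) (hμp : μp = Real.sqrt ((1 + κ)/2))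
    (G₂ G₃ : ℂ) (hG₂ : G₂ = 16 * (1 + 3 * (l:ℂ)^2) / 3)
    (hG₃ : G₃ = 64 * (1 - 9 * (l:ℂ)^2) / 27)
    (U : Set ℂ) (hU : IsOpen U) (P : ℂ → ℂ)
    (hP : ∀ z ∈ U, DifferentiableAt ℂ P z)
    (hPne : ∀ z ∈ U, P z - (4/3 + 2 * (κ:ℂ)) ≠ 0)
    (hPode : ∀ z ∈ U, (deriv P z) ^ 2 = 4 * (P z)^3 - G₂ * P z - G₃)
    (y : ℂ → ℂ)
    (hy : y = fun z => (μp:ℂ) * (1 + 4 * (κ:ℂ) / (P z - (4/3 + 2 * (κ:ℂ))))) :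
    ∀ z ∈ U, (deriv y z) ^ 2 = 8 * (y z)^4 - 8 * (y z)^2 + 2 * (l:ℂ)^2 := by
  intro z hz
  obtain ⟨hκ0, hκ1⟩ := hκ
  have hl2 : (l:ℂ)^2 = 1 - (κ:ℂ)^2 := by
    have h : l^2 = 1 - κ^2 := by
      rw [hl, Real.sq_sqrt]; nlinarith
    have := congrArg (Complex.ofReal) h
    push_cast at this; exact this
  have hμ2 : (μp:ℂ)^2 = (1 + (κ:ℂ))/2 := by
    have h : μp^2 = (1 + κ)/2 := by
      rw [hμp, Real.sq_sqrt]; nlinarith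
    have := congrArg (Complex.ofReal) h
    push_cast at this; exact this
  have h4 : (μp:ℂ)^4 = ((1 + (κ:ℂ))/2)^2 := by
    rw [show ((μp:ℂ)^4) = ((μp:ℂ)^2)^2 by ring, hμ2]
  set c : ℂ := 4/3 + 2 * (κ:ℂ) with hc
  have hQ : P z - c ≠ 0 := hPne z hz
  have h1 : HasDerivAt (fun w => P w - c) (deriv P z) z := (hP z hz).hasDerivAt.sub_const c
  have h2 : HasDerivAt (fun w => (P w - c)⁻¹) (-(deriv P z) / (P z - c)^2) z := h1.inv hQ
  have h3 : HasDerivAt y ((μp:ℂ) * (4 * (κ:ℂ) * (-(deriv P z) / (P z - c)^2))) z := by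
    rw [hy]
    simp only [div_eq_mul_inv]
    exact ((h2.const_mul (4 * (κ:ℂ))).const_add 1).const_mul (μp:ℂ)
  rw [h3.deriv, hy]
  simp only []
  have hode := hPode z hz
  rw [hG₂, hG₃, hl2] at hode
  rw [hl2]
  field_simp
  linear_combination (16*(μp:ℂ)^2*(κ:ℂ)^2) * hode
    + ((16*(κ:ℂ)^2*(4*(P z)^3 - 16*(1+3*(1-(κ:ℂ)^2))/3*(P z) - 64*(1-9*(1-(κ:ℂ)^2))/27)
        + 8*(P z - c + 4*(κ:ℂ))^2*(P z - c)^2)) * hμ2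
    + (-8*(P z - c + 4*(κ:ℂ))^4) * h4
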